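/- Let s ≥ 3/2. There is a constant c > 0, depending only on s, such that for all m ∈ ℤ and all M ∈ ℕ: (a) Σ_{n∈ℤ} ⟨n⟩^{−(2s−1)}⟨m−n⟩^{−1} ≤ c·⟨m⟩^{−1}; and (b) Σ_{n∈ℤ, |n|≥M} ⟨n⟩^{−(2s−1)}⟨m−n⟩^{−1} ≤ c·⟨m⟩^{−1}·( 1_{{|m| ≥ 2M/3}} + ⟨M⟩^{−1} ). -/
import Mathlib


/-- The Japanese bracket `⟨n⟩ = (1+n²)^{1/2}` of an integer. -/
noncomputable def jap (n : ℤ) : ℝ := Real.sqrt (1 + (n : ℝ) ^ 2)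

lemma jap_one_le (n : ℤ) : 1 ≤ jap n := by
  have h : (1:ℝ) ≤ 1 + (n:ℝ) ^ 2 := by nlinarith [sq_nonneg ((n:ℝ))]
  calc (1:ℝ) = Real.sqrt 1 := by simp
    _ ≤ _ := Real.sqrt_le_sqrt h

lemma jap_pos (n : ℤ) : 0 < jap n := lt_of_lt_of_le one_pos (jap_one_le n)

lemma jap_sq (n : ℤ) : jap n ^ 2 = 1 + (n : ℝ) ^ 2 := Real.sq_sqrt (by positivity)

lemma jap_rpow_neg_one (n : ℤ) : jap n ^ (-(1:ℝ)) = (jap n)⁻¹ := by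
  rw [Real.rpow_neg_one]

lemma jap_rpow_neg_two (n : ℤ) : jap n ^ (-(2:ℝ)) = (1 + (n : ℝ) ^ 2)⁻¹ := by
  rw [show (-(2:ℝ)) = -((2:ℕ):ℝ) by norm_num, Real.rpow_neg (jap_pos n).le,
    Real.rpow_natCast, jap_sq]

/-- `gg n = (1+n²)⁻¹` -/
noncomputable def gg (n : ℤ) : ℝ := (1 + (n : ℝ) ^ 2)⁻¹

lemma gg_nonneg (n : ℤ) : 0 ≤ gg n := by unfold gg; positivity

lemma key_ineq (k : ℝ) (hk : 0 ≤ k) : (1 + k ^ 2)⁻¹ ≤ 2 * ((k + 1) ^ 2)⁻¹ := by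
  have h1 : (0:ℝ) < 1 + k ^ 2 := by positivity
  have h2 : (0:ℝ) < (k + 1) ^ 2 := by positivity
  have := (div_le_div_iff₀ h1 h2).mpr
    (by nlinarith [sq_nonneg (k - 1)] : 1 * (k + 1) ^ 2 ≤ 2 * (1 + k ^ 2))
  simpa [div_eq_mul_inv] using this

lemma summable_gg_nat : Summable (fun k : ℕ => (1 + (k : ℝ) ^ 2)⁻¹) := by
  have h : Summable (fun k : ℕ => 2 * (((k:ℝ) + 1) ^ 2)⁻¹) := by
    have h0 : Summable (fun k : ℕ => ((k:ℝ) ^ 2)⁻¹) :=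
      (Real.summable_nat_pow_inv (p := 2)).mpr one_lt_two
    have := (summable_nat_add_iff 1).mpr h0
    exact (this.congr (by intro k; push_cast; ring_nf)).mul_left 2
  exact Summable.of_nonneg_of_le (fun k => by positivity)
    (fun k => key_ineq k k.cast_nonneg) h

lemma summable_gg : Summable gg := by
  refine Summable.of_nat_of_neg ?_ ?_
  · exact summable_gg_nat.congr (by intro k; simp [gg])
  · exact summable_gg_nat.congr (by intro k; simp [gg])

lemma tsum_gg_pos : 0 < ∑' n : ℤ, gg n :=
  Summable.tsum_pos summable_gg gg_nonneg 0 (by norm_num [gg])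

lemma tsum_gg_shift (m : ℤ) : ∑' n : ℤ, gg (m - n) = ∑' n : ℤ, gg n :=
  (Equiv.subLeft m).tsum_eq gg

lemma jap_triangle (m n : ℤ) : jap m ≤ 2 * jap n ∨ jap m ≤ 2 * jap (m - n) := by
  have hxy : (m:ℝ) = (n:ℝ) + ((m-n:ℤ):ℝ) := by push_cast; ring
  have hsq : ∀ (a b : ℤ), jap a ^ 2 ≤ (2 * jap b) ^ 2 → jap a ≤ 2 * jap b := by
    intro a b h
    have h1 := (jap_pos a).le
    have h2 : (0:ℝ) ≤ 2 * jap b := by linarith [jap_pos b]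
    exact (pow_le_pow_iff_left₀ h1 h2 two_ne_zero).mp h
  rcases le_total (((n:ℤ):ℝ)^2) (((m-n:ℤ):ℝ)^2) with h | h
  · right
    refine hsq m (m-n) ?_
    rw [mul_pow, jap_sq, jap_sq, hxy]
    nlinarith [sq_nonneg ((n:ℝ) - ((m-n:ℤ):ℝ))]
  · left
    refine hsq m n ?_
    rw [mul_pow, jap_sq, jap_sq, hxy]
    nlinarith [sq_nonneg ((n:ℝ) - ((m-n:ℤ):ℝ))]

lemma pointwise_a {s : ℝ} (hs : 3/2 ≤ s) (m n : ℤ) :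
    jap n ^ (-(2*s-1)) * jap (m-n) ^ (-(1:ℝ)) ≤ jap m ^ (-(1:ℝ)) * (3 * gg n + gg (m-n)) := by
  have ha := jap_pos n; have hb := jap_pos (m-n); have hc := jap_pos m
  have h1 : jap n ^ (-(2*s-1)) ≤ gg n := by
    unfold gg
    rw [← jap_rpow_neg_two]
    exact Real.rpow_le_rpow_of_exponent_le (jap_one_le n) (by linarith)
  rw [jap_rpow_neg_one, jap_rpow_neg_one]
  refine (mul_le_mul_of_nonneg_right h1 (by positivity)).trans ?_
  have hga : gg n = ((jap n)^2)⁻¹ := by rw [jap_sq]; rfl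
  have hgb : gg (m-n) = ((jap (m-n))^2)⁻¹ := by rw [jap_sq]; rfl
  rw [hga, hgb]
  set a := jap n with hA; set b := jap (m-n) with hB; set c := jap m with hC
  have key : b * c ≤ 3 * b^2 + a^2 := by
    rcases jap_triangle m n with h | h
    · nlinarith [sq_nonneg (a - b)]
    · nlinarith
  have e1 : (a^2)⁻¹ * b⁻¹ = 1 / (a^2*b) := by field_simp
  have e2 : c⁻¹ * (3*(a^2)⁻¹ + (b^2)⁻¹) = (3*b^2+a^2) / (c*(a^2*b^2)) := by
    field_simp
  rw [e1, e2, div_le_div_iff₀ (by positivity) (by positivity)]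
  nlinarith [mul_le_mul_of_nonneg_left key (le_of_lt (by positivity : (0:ℝ) < a^2*b))]

lemma term_telescope {x : ℝ} (hx : 1 ≤ x) : (1 + x^2)⁻¹ ≤ 2/x - 2/(x+1) := by
  have hx0 : (0:ℝ) < x := by linarith
  have hx1 : (0:ℝ) < x + 1 := by linarith
  have he : 2/x - 2/(x+1) = 2/(x*(x+1)) := by field_simp; ring
  rw [he, ← one_div]
  rw [div_le_div_iff₀ (by positivity) (by positivity)]
  nlinarith

lemma tail_sum_range (M : ℕ) (hM : 1 ≤ M) (N : ℕ) :
    (∑ k ∈ Finset.range N, if M ≤ k then (1 + (k:ℝ)^2)⁻¹ else 0)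
      ≤ 2/(M:ℝ) - 2/((max M N : ℕ):ℝ) := by
  induction N with
  | zero => simp
  | succ N ih =>
    rw [Finset.sum_range_succ]
    rcases lt_or_ge N M with h | h
    · rw [if_neg (by omega), add_zero, max_eq_left (by omega)]
      rw [max_eq_left (by omega)] at ih
      exact ih
    · rw [if_pos h, max_eq_right (by omega)]
      rw [max_eq_right (by omega)] at ih
      have hN : (1:ℝ) ≤ (N:ℝ) := by exact_mod_cast hM.trans h
      have ht := term_telescope hN
      push_cast
      push_cast at ih
      linarith

lemma tail_tsum_nat (M : ℕ) (hM : 1 ≤ M) :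
    (∑' k : ℕ, if M ≤ k then (1 + (k:ℝ)^2)⁻¹ else 0) ≤ 2/(M:ℝ) := by
  refine Real.tsum_le_of_sum_range_le (fun n => by positivity) (fun N => ?_)
  refine (tail_sum_range M hM N).trans ?_
  have : (0:ℝ) ≤ 2/((max M N : ℕ):ℝ) := by positivity
  linarith

lemma tail_tsum_nat' (M : ℕ) (hM : 1 ≤ M) :
    (∑' k : ℕ, if M ≤ k + 1 then (1 + ((k:ℝ)+1)^2)⁻¹ else 0) ≤ 2/(M:ℝ) := by
  refine Real.tsum_le_of_sum_range_le (fun n => by positivity) (fun N => ?_)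
  have h := tail_sum_range M hM (N+1)
  rw [Finset.sum_range_succ'] at h
  rw [if_neg (by omega), add_zero] at h
  refine le_trans (le_of_eq (Finset.sum_congr rfl fun i _ => ?_)) (h.trans ?_)
  · push_cast; norm_num
  · have : (0:ℝ) ≤ 2/((max M (N+1) : ℕ):ℝ) := by positivity
    linarith

lemma four_div_le (M : ℕ) (hM : 1 ≤ M) : 4 / (M:ℝ) ≤ 6 * (jap (M:ℤ))⁻¹ := by
  have hM0 : (0:ℝ) < (M:ℝ) := by exact_mod_cast hM
  have hj := jap_pos (M:ℤ)
  have hsq : jap (M:ℤ) ^ 2 = 1 + (M:ℝ)^2 := by rw [jap_sq]; push_cast; ring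
  have hle : jap (M:ℤ) ≤ 3/2 * (M:ℝ) := by
    refine (pow_le_pow_iff_left₀ hj.le (by positivity) two_ne_zero).mp ?_
    have hM1 : (1:ℝ) ≤ (M:ℝ) := by exact_mod_cast hM
    nlinarith
  rw [show 6 * (jap (M:ℤ))⁻¹ = 6 / jap (M:ℤ) by rw [div_eq_mul_inv],
    div_le_div_iff₀ hM0 hj]
  linarith

lemma tail_tsum_int (M : ℕ) (hM : 1 ≤ M) :
    (∑' n : ℤ, if (M:ℤ) ≤ |n| then gg n else 0) ≤ 6 * (jap (M:ℤ))⁻¹ := by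
  set F : ℤ → ℝ := fun n => if (M:ℤ) ≤ |n| then gg n else 0 with hF
  have e₁ : ∀ k : ℕ, F (k:ℤ) = (if M ≤ k then (1 + (k:ℝ)^2)⁻¹ else 0) := by
    intro k
    rw [hF]
    simp only
    rw [abs_of_nonneg (by positivity : (0:ℤ) ≤ (k:ℤ))]
    refine if_congr (by omega) ?_ rfl
    unfold gg; push_cast; ring_nf
  have e₂ : ∀ k : ℕ, F (-((k:ℤ)+1)) = (if M ≤ k + 1 then (1 + ((k:ℝ)+1)^2)⁻¹ else 0) := by
    intro k
    rw [hF]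
    simp only
    rw [abs_neg, abs_of_nonneg (by positivity : (0:ℤ) ≤ (k:ℤ)+1)]
    refine if_congr (by omega) ?_ rfl
    unfold gg; push_cast; ring_nf
  have hs₁ : Summable (fun k : ℕ => F (k:ℤ)) := by
    refine Summable.of_nonneg_of_le (fun k => by rw [e₁]; positivity)
      (fun k => ?_) summable_gg_nat
    rw [e₁]; split
    · exact le_refl _
    · positivity
  have hs₂ : Summable (fun k : ℕ => F (-((k:ℤ)+1))) := by
    have hbig : Summable (fun k : ℕ => (1 + ((k:ℝ)+1)^2)⁻¹) := by
      refine (summable_nat_add_iff 1).mpr summable_gg_nat |>.congr (fun k => ?_)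
      push_cast; ring_nf
    refine Summable.of_nonneg_of_le (fun k => by rw [e₂]; positivity)
      (fun k => ?_) hbig
    rw [e₂]; split
    · exact le_refl _
    · positivity
  have := tsum_of_nat_of_neg_add_one hs₁ hs₂
  rw [this]
  have t₁ : (∑' k : ℕ, F (k:ℤ)) ≤ 2/(M:ℝ) := by
    rw [tsum_congr e₁]; exact tail_tsum_nat M hM
  have t₂ : (∑' k : ℕ, F (-((k:ℤ)+1))) ≤ 2/(M:ℝ) := by
    rw [tsum_congr e₂]; exact tail_tsum_nat' M hM
  have := four_div_le M hM
  have h4 : 4/(M:ℝ) = 2/(M:ℝ) + 2/(M:ℝ) := by ring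
  linarith

lemma jap_rpow_le_gg {s : ℝ} (hs : 3/2 ≤ s) (n : ℤ) : jap n ^ (-(2*s-1)) ≤ gg n := by
  unfold gg
  rw [← jap_rpow_neg_two]
  exact Real.rpow_le_rpow_of_exponent_le (jap_one_le n) (by linarith)

lemma tsum_a {s : ℝ} (hs : 3/2 ≤ s) (m : ℤ) :
    ∑' n : ℤ, jap n ^ (-(2*s-1)) * jap (m-n) ^ (-(1:ℝ))
      ≤ (4 * ∑' n : ℤ, gg n) * jap m ^ (-(1:ℝ)) := by
  have hf_le : ∀ n, jap n ^ (-(2*s-1)) * jap (m-n) ^ (-(1:ℝ)) ≤ gg n := fun n => by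
    have h2 : jap (m-n) ^ (-(1:ℝ)) ≤ 1 := by
      rw [jap_rpow_neg_one]; exact inv_le_one_of_one_le₀ (jap_one_le _)
    calc jap n ^ (-(2*s-1)) * jap (m-n) ^ (-(1:ℝ))
        ≤ gg n * 1 := by
          refine mul_le_mul (jap_rpow_le_gg hs n) h2 ?_ (gg_nonneg n)
          exact Real.rpow_nonneg (jap_pos _).le _
      _ = gg n := mul_one _
  have hfs : Summable (fun n : ℤ => jap n ^ (-(2*s-1)) * jap (m-n) ^ (-(1:ℝ))) := by
    refine Summable.of_nonneg_of_le (fun n => ?_) hf_le summable_gg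
    have := (jap_pos n); have := jap_pos (m-n); positivity
  have hshift : Summable (fun n : ℤ => gg (m - n)) :=
    (Equiv.subLeft m).summable_iff.mpr summable_gg
  have hgs : Summable (fun n : ℤ => 3 * gg n + gg (m-n)) :=
    (summable_gg.mul_left 3).add hshift
  have hRHS : Summable (fun n : ℤ => jap m ^ (-(1:ℝ)) * (3 * gg n + gg (m-n))) :=
    hgs.mul_left _
  refine (Summable.tsum_le_tsum (pointwise_a hs m) hfs hRHS).trans ?_
  rw [tsum_mul_left, Summable.tsum_add (summable_gg.mul_left 3) hshift, tsum_mul_left, tsum_gg_shift]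
  exact le_of_eq (by ring)

lemma pointwise_b {s : ℝ} (hs : 3/2 ≤ s) (m : ℤ) (M : ℕ)
    (hm : |(m:ℝ)| < 2*(M:ℝ)/3) (n : ℤ) :
    (if (M:ℤ) ≤ |n| then jap n ^ (-(2*s-1)) * jap (m-n) ^ (-(1:ℝ)) else 0)
      ≤ 3 * jap m ^ (-(1:ℝ)) * (if (M:ℤ) ≤ |n| then gg n else 0) := by
  have hc := jap_pos m
  split_ifs with h
  · have ha := jap_pos n; have hb := jap_pos (m-n)
    have hMn : (M:ℝ) ≤ |(n:ℝ)| := by exact_mod_cast h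
    have hax : jap n ^ 2 = 1 + (n:ℝ)^2 := jap_sq n
    have hbx : jap (m-n) ^ 2 = 1 + ((m:ℝ)-(n:ℝ))^2 := by rw [jap_sq]; push_cast; ring
    have hcx : jap m ^ 2 = 1 + (m:ℝ)^2 := jap_sq m
    have h1 : |(m:ℝ)| ≤ 2/3 * |(n:ℝ)| := by linarith
    have habs : |(n:ℝ)|/3 ≤ |(n:ℝ) - (m:ℝ)| := by
      have := abs_sub_abs_le_abs_sub (n:ℝ) (m:ℝ)
      linarith
    have hab : jap n ≤ 3 * jap (m-n) := by
      refine (pow_le_pow_iff_left₀ ha.le (by positivity) two_ne_zero).mp ?_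
      rw [mul_pow, hax, hbx]
      have h2 : (|(n:ℝ)|/3)^2 ≤ ((n:ℝ)-(m:ℝ))^2 := by
        rw [← sq_abs ((n:ℝ)-(m:ℝ))]
        exact pow_le_pow_left₀ (by positivity) habs 2
      have h3 : ((m:ℝ)-(n:ℝ))^2 = ((n:ℝ)-(m:ℝ))^2 := by ring
      nlinarith [sq_abs (n:ℝ)]
    have hca : jap m ≤ jap n := by
      refine (pow_le_pow_iff_left₀ hc.le ha.le two_ne_zero).mp ?_
      rw [hax, hcx]
      nlinarith [sq_abs (m:ℝ), sq_abs (n:ℝ), abs_nonneg (m:ℝ), abs_nonneg (n:ℝ)]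
    rw [jap_rpow_neg_one, jap_rpow_neg_one]
    have hb3 : (jap (m-n))⁻¹ ≤ 3 * (jap m)⁻¹ := by
      rw [← one_div, show 3 * (jap m)⁻¹ = 3 / jap m by rw [div_eq_mul_inv],
        div_le_div_iff₀ hb hc]
      linarith
    calc jap n ^ (-(2*s-1)) * (jap (m-n))⁻¹
        ≤ gg n * (jap (m-n))⁻¹ := by
          refine mul_le_mul_of_nonneg_right (jap_rpow_le_gg hs n) (by positivity)
      _ ≤ gg n * (3 * (jap m)⁻¹) := mul_le_mul_of_nonneg_left hb3 (gg_nonneg n)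
      _ = 3 * (jap m)⁻¹ * gg n := by ring
  · simp

lemma f_nonneg {s : ℝ} (m n : ℤ) :
    0 ≤ jap n ^ (-(2*s-1)) * jap (m-n) ^ (-(1:ℝ)) := by
  have := jap_pos n; have := jap_pos (m-n); positivity

lemma f_le_gg {s : ℝ} (hs : 3/2 ≤ s) (m n : ℤ) :
    jap n ^ (-(2*s-1)) * jap (m-n) ^ (-(1:ℝ)) ≤ gg n := by
  have h2 : jap (m-n) ^ (-(1:ℝ)) ≤ 1 := by
    rw [jap_rpow_neg_one]; exact inv_le_one_of_one_le₀ (jap_one_le _)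
  calc jap n ^ (-(2*s-1)) * jap (m-n) ^ (-(1:ℝ))
      ≤ gg n * 1 := mul_le_mul (jap_rpow_le_gg hs n) h2
        (Real.rpow_nonneg (jap_pos _).le _) (gg_nonneg n)
    _ = gg n := mul_one _

/-- Convolution estimates, case `s ≥ 3/2`. -/
theorem statement5 (s : ℝ) (hs : 3 / 2 ≤ s) :
    ∃ c > 0, ∀ (m : ℤ) (M : ℕ),
      (∑' n : ℤ, jap n ^ (-(2 * s - 1)) * jap (m - n) ^ (-(1 : ℝ))
          ≤ c * jap m ^ (-(1 : ℝ))) ∧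
      (∑' n : ℤ, (if (M : ℤ) ≤ |n| then
            jap n ^ (-(2 * s - 1)) * jap (m - n) ^ (-(1 : ℝ)) else 0)
          ≤ c * jap m ^ (-(1 : ℝ)) *
            ((if 2 * (M : ℝ) / 3 ≤ |(m : ℝ)| then (1 : ℝ) else 0)
              + jap (M : ℤ) ^ (-(1 : ℝ)))) := by
  have hK := tsum_gg_pos
  set K := ∑' n : ℤ, gg n with hKdef
  refine ⟨4*K + 18, by linarith, fun m M => ?_⟩
  have hcm : (0:ℝ) < jap m ^ (-(1:ℝ)) := Real.rpow_pos_of_pos (jap_pos m) _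
  have hparta := tsum_a hs m
  have hconst : (4*K) * jap m ^ (-(1:ℝ)) ≤ (4*K+18) * jap m ^ (-(1:ℝ)) := by nlinarith
  have hfs : Summable (fun n : ℤ => jap n ^ (-(2*s-1)) * jap (m-n) ^ (-(1:ℝ))) :=
    Summable.of_nonneg_of_le (fun n => f_nonneg m n) (f_le_gg hs m) summable_gg
  have hF_le : ∀ n : ℤ,
      (if (M:ℤ) ≤ |n| then jap n ^ (-(2*s-1)) * jap (m-n) ^ (-(1:ℝ)) else 0) ≤ gg n := by
    intro n; split
    · exact f_le_gg hs m n
    · exact gg_nonneg n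
  have hF_nonneg : ∀ n : ℤ,
      0 ≤ (if (M:ℤ) ≤ |n| then jap n ^ (-(2*s-1)) * jap (m-n) ^ (-(1:ℝ)) else 0) := by
    intro n; split
    · exact f_nonneg m n
    · exact le_refl 0
  have hFs : Summable (fun n : ℤ =>
      if (M:ℤ) ≤ |n| then jap n ^ (-(2*s-1)) * jap (m-n) ^ (-(1:ℝ)) else 0) :=
    Summable.of_nonneg_of_le hF_nonneg hF_le summable_gg
  constructor
  · exact hparta.trans hconst
  · by_cases hcase : 2*(M:ℝ)/3 ≤ |(m:ℝ)|
    · rw [if_pos hcase]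
      have hjM : (0:ℝ) ≤ jap (M:ℤ) ^ (-(1:ℝ)) :=
        (Real.rpow_pos_of_pos (jap_pos _) _).le
      have h1 : (∑' n : ℤ,
          if (M:ℤ) ≤ |n| then jap n ^ (-(2*s-1)) * jap (m-n) ^ (-(1:ℝ)) else 0)
          ≤ ∑' n : ℤ, jap n ^ (-(2*s-1)) * jap (m-n) ^ (-(1:ℝ)) := by
        refine Summable.tsum_le_tsum (fun n => ?_) hFs hfs
        split
        · exact le_refl _
        · exact f_nonneg m n
      refine (h1.trans (hparta.trans hconst)).trans ?_
      have hge : (1:ℝ) ≤ 1 + jap (M:ℤ) ^ (-(1:ℝ)) := by linarith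
      have hX : (0:ℝ) ≤ (4*K+18) * jap m ^ (-(1:ℝ)) :=
        mul_nonneg (by linarith) hcm.le
      calc (4*K+18) * jap m ^ (-(1:ℝ))
          = (4*K+18) * jap m ^ (-(1:ℝ)) * 1 := (mul_one _).symm
        _ ≤ (4*K+18) * jap m ^ (-(1:ℝ)) * (1 + jap (M:ℤ) ^ (-(1:ℝ))) :=
            mul_le_mul_of_nonneg_left hge hX
    · rw [if_neg hcase]
      push_neg at hcase
      have hM1 : 1 ≤ M := by
        rcases Nat.eq_zero_or_pos M with h0 | h
        · exfalso; rw [h0] at hcase; norm_num at hcase; linarith [abs_nonneg (m:ℝ)]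
        · exact h
      have hind : Summable (fun n : ℤ => if (M:ℤ) ≤ |n| then gg n else 0) := by
        refine Summable.of_nonneg_of_le (fun n => ?_) (fun n => ?_) summable_gg
        · split; exacts [gg_nonneg n, le_refl 0]
        · split; exacts [le_refl _, gg_nonneg n]
      have h2 := Summable.tsum_le_tsum (pointwise_b hs m M hcase) hFs (hind.mul_left _)
      rw [tsum_mul_left] at h2
      have h3 := tail_tsum_int M hM1
      have hjMi : (0:ℝ) ≤ (jap (M:ℤ))⁻¹ := (inv_pos.mpr (jap_pos _)).le
      have h4 : 3 * jap m ^ (-(1:ℝ)) * (∑' n : ℤ, if (M:ℤ) ≤ |n| then gg n else 0)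
          ≤ 3 * jap m ^ (-(1:ℝ)) * (6 * (jap (M:ℤ))⁻¹) := by
        refine mul_le_mul_of_nonneg_left h3 (by positivity)
      have h5 : 3 * jap m ^ (-(1:ℝ)) * (6 * (jap (M:ℤ))⁻¹)
          ≤ (4*K+18) * jap m ^ (-(1:ℝ)) * (0 + jap (M:ℤ) ^ (-(1:ℝ))) := by
        rw [zero_add, jap_rpow_neg_one (M:ℤ)]
        have h6 : (18:ℝ) * (jap m ^ (-(1:ℝ)) * (jap (M:ℤ))⁻¹)
            ≤ (4*K+18) * (jap m ^ (-(1:ℝ)) * (jap (M:ℤ))⁻¹) := by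
          refine mul_le_mul_of_nonneg_right (by linarith) (by positivity)
        calc 3 * jap m ^ (-(1:ℝ)) * (6 * (jap (M:ℤ))⁻¹)
            = 18 * (jap m ^ (-(1:ℝ)) * (jap (M:ℤ))⁻¹) := by ring
          _ ≤ (4*K+18) * (jap m ^ (-(1:ℝ)) * (jap (M:ℤ))⁻¹) := h6
          _ = (4*K+18) * jap m ^ (-(1:ℝ)) * (jap (M:ℤ))⁻¹ := by ring
      exact h2.trans (h4.trans h5)
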